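/- Let n ≥ 2 and m ≥ n be integers, and for 1 ≤ i ≤ n let A_i = D_n^m + w_i, where w_1 = (0,0) and w_i = w_{i-1} + (2^{n-i+1}·m/2 + 1, −1 + ∑_{j=1}^{2^{n-i+1}/2} s_j) for 2 ≤ i ≤ n, i.e., w_i − w_{i-1} = (2^{n-i}m + 1, (∑_{j=1}^{2^{n-i}} s_j) − 1). Then for every pair 1 ≤ i < j ≤ n, the interiors of A_i and A_j are disjoint. -/

import Mathlib

/-- The ruler sequence: `s i = v₂(i) + 1`. -/
def rulerSeq (i : ℕ) : ℕ := padicValNat 2 i + 1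

/-- `yCoord i = y_i = ∑_{j=1}^{i-1} s j`. -/
def yCoord (i : ℕ) : ℕ := ∑ j ∈ Finset.Ico 1 i, rulerSeq j

/-- The `i`-th bar of `D_n^m`: `[(i-1)m, im] × [y_i, y_i + 1]`. -/
def bar (m i : ℕ) : Set (ℝ × ℝ) :=
  Set.Icc (((i : ℝ) - 1) * m) ((i : ℝ) * m) ×ˢ Set.Icc ((yCoord i : ℝ)) ((yCoord i : ℝ) + 1)

/-- The `i`-th connector of `D_n^m`: `[im - 1, im] × [y_i + 1, y_{i+1} + 1]`. -/
def connector (m i : ℕ) : Set (ℝ × ℝ) :=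
  Set.Icc ((i : ℝ) * m - 1) ((i : ℝ) * m) ×ˢ
    Set.Icc ((yCoord i : ℝ) + 1) ((yCoord (i + 1) : ℝ) + 1)

/-- The region `D_n^m`: union of `2^n` bars and `2^n - 1` connectors. -/
def Dregion (n m : ℕ) : Set (ℝ × ℝ) :=
  (⋃ i ∈ Finset.Icc 1 (2 ^ n), bar m i) ∪ ⋃ i ∈ Finset.Icc 1 (2 ^ n - 1), connector m i

lemma padic_sum_factorial (N : ℕ) :
    ∑ t ∈ Finset.Ico 1 (N+1), padicValNat 2 t = padicValNat 2 (Nat.factorial N) := by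
  induction N with
  | zero => simp
  | succ N ih =>
    rw [Finset.sum_Ico_succ_top (by omega), ih, Nat.factorial_succ,
      padicValNat.mul (by omega) (Nat.factorial_ne_zero N)]
    ring

lemma padic_superadd (x a : ℕ) :
    padicValNat 2 (Nat.factorial x) + padicValNat 2 (Nat.factorial a)
      ≤ padicValNat 2 (Nat.factorial (x + a)) := by
  obtain ⟨c, hc⟩ := Nat.factorial_mul_factorial_dvd_factorial_add x a
  have hc0 : c ≠ 0 := by
    intro h; rw [h, mul_zero] at hc; exact Nat.factorial_ne_zero _ hc
  rw [hc, padicValNat.mul (by positivity) hc0,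
    padicValNat.mul (Nat.factorial_ne_zero x) (Nat.factorial_ne_zero a)]
  omega

lemma sum_Ico_double (N : ℕ) :
    ∑ t ∈ Finset.Ico 1 (2*N+1), padicValNat 2 t
      = N + ∑ t ∈ Finset.Ico 1 (N+1), padicValNat 2 t := by
  induction N with
  | zero => simp
  | succ N ih =>
    have hodd : padicValNat 2 (2*N+1) = 0 := padicValNat.eq_zero_of_not_dvd (by omega)
    have heven : padicValNat 2 (2*N+2) = padicValNat 2 (N+1) + 1 := by
      have h : 2*N+2 = 2*(N+1) := by ring
      rw [h, padicValNat.mul (by omega) (by omega), padicValNat.self one_lt_two]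
      ring
    have e1 : ∑ t ∈ Finset.Ico 1 (2*(N+1)+1), padicValNat 2 t
        = ∑ t ∈ Finset.Ico 1 (2*N+1), padicValNat 2 t + padicValNat 2 (2*N+1)
          + padicValNat 2 (2*N+2) := by
      have h1 : 2*(N+1)+1 = (2*N+2)+1 := by ring
      rw [h1, Finset.sum_Ico_succ_top (by omega)]
      have h2 : 2*N+2 = (2*N+1)+1 := by ring
      rw [h2, Finset.sum_Ico_succ_top (by omega)]
    have e2 : ∑ t ∈ Finset.Ico 1 (N+1+1), padicValNat 2 t
        = ∑ t ∈ Finset.Ico 1 (N+1), padicValNat 2 t + padicValNat 2 (N+1) :=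
      Finset.sum_Ico_succ_top (by omega) _
    rw [e1, ih, hodd, heven, e2]
    ring

lemma sum_pow_sub_one (b : ℕ) :
    ∑ t ∈ Finset.Ico 1 (2^b - 1 + 1), padicValNat 2 t = 2^b - 1 - b := by
  induction b with
  | zero => simp
  | succ b ih =>
    have h1 : 1 ≤ 2^b := Nat.one_le_two_pow
    have hb : b < 2^b := Nat.lt_two_pow_self
    have h2 : 2^(b+1) - 1 + 1 = 2*(2^b - 1) + 1 + 1 := by rw [pow_succ]; omega
    rw [h2, Finset.sum_Ico_succ_top (by omega), sum_Ico_double]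
    have hodd : padicValNat 2 (2*(2^b-1)+1) = 0 := padicValNat.eq_zero_of_not_dvd (by omega)
    rw [hodd, ih]
    have : 2^(b+1) = 2*2^b := by rw [pow_succ]; ring
    omega

lemma Gval (r b : ℕ) :
    ∑ t ∈ Finset.Ico 1 (2^r * (2^b - 1) + 1), padicValNat 2 t = 2^r * (2^b - 1) - b := by
  induction r with
  | zero => simpa using sum_pow_sub_one b
  | succ r ih =>
    have h1 : 1 ≤ 2^b := Nat.one_le_two_pow
    have hb : b < 2^b := Nat.lt_two_pow_self
    have h2 : 2^(r+1) * (2^b - 1) = 2*(2^r * (2^b - 1)) := by rw [pow_succ]; ring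
    rw [h2, sum_Ico_double, ih]
    have h3 : b ≤ 2^r * (2^b - 1) := by
      calc b ≤ 1 * (2^b - 1) := by omega
      _ ≤ 2^r * (2^b - 1) := Nat.mul_le_mul_right _ Nat.one_le_two_pow
    omega

lemma b_le_a (r b : ℕ) : b ≤ 2^r * (2^b - 1) := by
  have hb : b < 2^b := Nat.lt_two_pow_self
  calc b ≤ 1 * (2^b - 1) := by omega
  _ ≤ 2^r * (2^b - 1) := Nat.mul_le_mul_right _ Nat.one_le_two_pow

lemma key' (r c l k : ℕ) (hl : 1 ≤ l) (hk : l + 2^r * (2^c - 1) ≤ k) :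
    yCoord l + 2 * (2^r * (2^c - 1)) ≤ yCoord k + c := by
  set a := 2^r * (2^c - 1) with ha
  have hca : c ≤ a := b_le_a r c
  have hmono : yCoord (l + a) ≤ yCoord k := by
    apply Finset.sum_le_sum_of_subset
    apply Finset.Ico_subset_Ico le_rfl hk
  have hsplit : yCoord (l+a) = yCoord l + ∑ t ∈ Finset.Ico l (l+a), rulerSeq t := by
    rw [yCoord, yCoord, ← Finset.sum_Ico_consecutive _ hl (Nat.le_add_right l a)]
  have hcount : ∑ t ∈ Finset.Ico l (l+a), rulerSeq t
      = a + ∑ t ∈ Finset.Ico l (l+a), padicValNat 2 t := by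
    simp [rulerSeq, Finset.sum_add_distrib, Nat.add_sub_cancel_left, add_comm]
  have hv : ∑ t ∈ Finset.Ico 1 l, padicValNat 2 t + ∑ t ∈ Finset.Ico l (l+a), padicValNat 2 t
      = ∑ t ∈ Finset.Ico 1 (l+a), padicValNat 2 t :=
    Finset.sum_Ico_consecutive _ hl (Nat.le_add_right l a)
  -- superadditivity: with l = (l-1)+1
  obtain ⟨N, rfl⟩ : ∃ N, l = N + 1 := ⟨l - 1, by omega⟩
  have hsup : ∑ t ∈ Finset.Ico 1 (N+1), padicValNat 2 t + (a - c)
      ≤ ∑ t ∈ Finset.Ico 1 (N+1+a), padicValNat 2 t := by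
    have e1 : N+1+a = (N+a)+1 := by ring
    rw [e1, padic_sum_factorial, padic_sum_factorial]
    have := padic_superadd N a
    have e2 : padicValNat 2 (Nat.factorial a) = a - c := by
      rw [← padic_sum_factorial, Gval]
    omega
  omega

lemma ruler_sum (r : ℕ) : ∑ t ∈ Finset.Icc 1 (2^r), rulerSeq t = 2^(r+1) - 1 := by
  have h1 : 1 ≤ (2:ℕ)^r := Nat.one_le_two_pow
  have h := Gval r 1
  simp only [pow_one] at h
  have h2 : (2:ℕ)^r * (2 - 1) = 2^r := by ring
  rw [h2] at h
  rw [← Finset.Ico_add_one_right_eq_Icc]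
  have : ∀ t, rulerSeq t = padicValNat 2 t + 1 := fun t => rfl
  rw [Finset.sum_congr rfl (fun t _ => this t), Finset.sum_add_distrib, h]
  simp [Nat.card_Ico, pow_succ]
  omega

lemma ruler_sum_cast (r : ℕ) :
    (∑ t ∈ Finset.Icc 1 (2^r), (rulerSeq t : ℝ)) = 2^(r+1) - 1 := by
  rw [← Nat.cast_sum, ruler_sum, Nat.cast_sub Nat.one_le_two_pow]
  push_cast
  ring

lemma wdiff' (n m : ℕ) (w : ℕ → ℝ × ℝ)
    (hw : ∀ i, 2 ≤ i → i ≤ n →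
      w i = w (i - 1) +
        ((2 : ℝ) ^ (n - i) * m + 1,
          (∑ j ∈ Finset.Icc 1 (2 ^ (n - i)), (rulerSeq j : ℝ)) - 1)) :
    ∀ i, 1 ≤ i → ∀ j, i < j → j ≤ n →
      w j = w i + (((2:ℝ)^(n-i) - 2^(n-j)) * m + ((j:ℝ) - i),
        2*((2:ℝ)^(n-i) - 2^(n-j)) - 2*((j:ℝ) - i)) := by
  intro i hi j hij
  induction j, hij using Nat.le_induction with
  | base =>
    intro hn
    have h := hw (i+1) (by omega) hn
    have e0 : i + 1 - 1 = i := by omega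
    rw [e0] at h
    rw [h, ruler_sum_cast]
    have e1 : n - i = (n - (i+1)) + 1 := by omega
    rw [e1]
    congr 1
    apply Prod.ext <;> simp only [Prod.fst_add, Prod.snd_add] <;> push_cast <;>
      rw [pow_succ] <;> ring
  | succ j hj ih =>
    intro hn
    have h := hw (j+1) (by omega) hn
    have e0 : j + 1 - 1 = j := by omega
    rw [e0] at h
    rw [h, ih (by omega), ruler_sum_cast, add_assoc]
    have e1 : n - j = (n - (j+1)) + 1 := by omega
    rw [e1]
    congr 1
    apply Prod.ext <;> simp only [Prod.fst_add, Prod.snd_add] <;> push_cast <;>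
      rw [pow_succ] <;> ring

lemma mem_Dregion_elim {n m : ℕ} {p : ℝ × ℝ} (h : p ∈ Dregion n m) :
    (∃ k : ℕ, 1 ≤ k ∧ k ≤ 2^n ∧ ((k:ℝ)-1)*m ≤ p.1 ∧ p.1 ≤ (k:ℝ)*m ∧
      (yCoord k : ℝ) ≤ p.2 ∧ p.2 ≤ (yCoord k : ℝ) + 1) ∨
    (∃ k : ℕ, 1 ≤ k ∧ k ≤ 2^n - 1 ∧ (k:ℝ)*m - 1 ≤ p.1 ∧ p.1 ≤ (k:ℝ)*m ∧
      (yCoord k : ℝ) + 1 ≤ p.2 ∧ p.2 ≤ (yCoord (k+1) : ℝ) + 1) := by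
  simp only [Dregion, Set.mem_union, Set.mem_iUnion, Finset.mem_Icc, bar, connector,
    Set.mem_prod, Set.mem_Icc, exists_prop] at h
  rcases h with ⟨k, ⟨hk1, hk2⟩, ⟨hx1, hx2⟩, hy1, hy2⟩ | ⟨k, ⟨hk1, hk2⟩, ⟨hx1, hx2⟩, hy1, hy2⟩
  · exact Or.inl ⟨k, hk1, hk2, hx1, hx2, hy1, hy2⟩
  · exact Or.inr ⟨k, hk1, hk2, hx1, hx2, hy1, hy2⟩

lemma mem_Dregion_strict' {n m : ℕ} {p : ℝ × ℝ} (h : p ∈ Dregion n m)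
    (hx : ∀ t : ℕ, t ≤ 2^n → p.1 ≠ (t:ℝ)*m ∧ p.1 ≠ (t:ℝ)*m - 1)
    (hy : ∀ t : ℕ, t ≤ 2^n → p.2 ≠ (yCoord t : ℝ) ∧ p.2 ≠ (yCoord t : ℝ) + 1) :
    (∃ k : ℕ, 1 ≤ k ∧ k ≤ 2^n ∧ ((k:ℝ)-1)*m < p.1 ∧ p.1 < (k:ℝ)*m ∧
      (yCoord k : ℝ) < p.2 ∧ p.2 < (yCoord k : ℝ) + 1) ∨
    (∃ k : ℕ, 1 ≤ k ∧ k ≤ 2^n - 1 ∧ (k:ℝ)*m - 1 < p.1 ∧ p.1 < (k:ℝ)*m ∧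
      (yCoord k : ℝ) + 1 < p.2 ∧ p.2 < (yCoord (k+1) : ℝ) + 1) := by
  have h2n : 1 ≤ 2^n := Nat.one_le_two_pow
  rcases mem_Dregion_elim h with ⟨k, hk1, hk2, hx1, hx2, hy1, hy2⟩ |
      ⟨k, hk1, hk2, hx1, hx2, hy1, hy2⟩
  · left
    refine ⟨k, hk1, hk2, ?_, ?_, ?_, ?_⟩
    · refine lt_of_le_of_ne hx1 ?_
      have hc : ((k:ℝ) - 1) = ((k - 1 : ℕ) : ℝ) := by
        rw [Nat.cast_sub hk1]; push_cast; ring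
      rw [hc]
      exact fun e => (hx (k-1) (by omega)).1 e.symm
    · exact lt_of_le_of_ne hx2 (hx k hk2).1
    · exact lt_of_le_of_ne hy1 fun e => (hy k hk2).1 e.symm
    · exact lt_of_le_of_ne hy2 (hy k hk2).2
  · right
    refine ⟨k, hk1, hk2, ?_, ?_, ?_, ?_⟩
    · exact lt_of_le_of_ne hx1 fun e => (hx k (by omega)).2 e.symm
    · exact lt_of_le_of_ne hx2 (hx k (by omega)).1
    · exact lt_of_le_of_ne hy1 fun e => (hy k (by omega)).2 e.symm
    · exact lt_of_le_of_ne hy2 (hy (k+1) (by omega)).2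

lemma exists_avoid' (u ε : ℝ) (hε : 0 < ε) (S : Set ℝ) (hS : S.Finite) :
    ∃ x, u < x ∧ x < u + ε ∧ x ∉ S := by
  have hne : ¬ (Set.Ioo u (u+ε) ⊆ S) := fun hsub =>
    Set.Ioo_infinite (by linarith) (hS.subset hsub)
  obtain ⟨x, hx, hxS⟩ := Set.not_subset.mp hne
  exact ⟨x, hx.1, hx.2, hxS⟩

theorem construction_translates_disjoint (n m : ℕ) (hn : 2 ≤ n) (hm : n ≤ m)
    (w : ℕ → ℝ × ℝ) (hw1 : w 1 = 0)
    (hw : ∀ i, 2 ≤ i → i ≤ n →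
      w i = w (i - 1) +
        ((2 : ℝ) ^ (n - i) * m + 1,
          (∑ j ∈ Finset.Icc 1 (2 ^ (n - i)), (rulerSeq j : ℝ)) - 1)) :
    ∀ i j : ℕ, 1 ≤ i → i < j → j ≤ n →
      Disjoint (interior ((· + w i) '' Dregion n m))
        (interior ((· + w j) '' Dregion n m)) := by
  intro i j hi hij hjn
  set r : ℕ := n - j with hr
  set b : ℕ := j - i with hbdef
  set aN : ℕ := 2^r * (2^b - 1) with haN
  have hb1 : 1 ≤ b := by omega
  have hbm : b + 1 ≤ m := by omega
  have hm0 : (0:ℝ) < m := by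
    have : 0 < m := by omega
    exact_mod_cast this
  have hbmR : (b:ℝ) + 1 ≤ m := by exact_mod_cast hbm
  have hb1R : (1:ℝ) ≤ b := by exact_mod_cast hb1
  -- the translation vector
  set v : ℝ × ℝ := ((aN:ℝ) * m + b, 2*(aN:ℝ) - 2*b) with hv
  have hbcast : ((b:ℕ):ℝ) = (j:ℝ) - i := by
    rw [hbdef, Nat.cast_sub hij.le]
  have hacast : ((aN:ℕ):ℝ) = (2:ℝ)^(n-i) - 2^(n-j) := by
    have hrb : r + b = n - i := by omega
    calc ((aN:ℕ):ℝ) = (2:ℝ)^r * ((2:ℝ)^b - 1) := by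
          rw [haN, Nat.cast_mul, Nat.cast_sub Nat.one_le_two_pow]
          push_cast
          ring
      _ = (2:ℝ)^(r+b) - 2^r := by rw [pow_add]; ring
      _ = (2:ℝ)^(n-i) - 2^(n-j) := by rw [hrb, hr]
  have hwj : w j = w i + v := by
    rw [wdiff' n m w hw i hi j hij hjn]
    congr 1
    apply Prod.ext <;> simp only [hv] <;> rw [hacast, hbcast]
  -- key inequality, real version
  have keyR : ∀ l k : ℕ, 1 ≤ l → l + aN ≤ k →
      (yCoord l : ℝ) + 2*(aN:ℝ) ≤ (yCoord k : ℝ) + (b:ℝ) := by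
    intro l k hl hk
    have h0 := key' r b l k hl hk
    rw [← haN] at h0
    exact_mod_cast h0
  -- helpers to convert real x-inequalities to nat inequalities
  have step1 : ∀ l k : ℕ, ((l:ℝ) - 1 + (aN:ℝ)) * m < (k:ℝ)*m → l + aN ≤ k := by
    intro l k h
    have h2 := (mul_lt_mul_iff_left₀ hm0).mp h
    have h3 : ((l + aN : ℕ):ℝ) < ((k + 1 : ℕ):ℝ) := by push_cast; linarith
    have h4 : l + aN < k + 1 := by exact_mod_cast h3
    omega
  have step2 : ∀ l k : ℕ, ((l:ℝ) + (aN:ℝ)) * m < (k:ℝ)*m → l + 1 + aN ≤ k := by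
    intro l k h
    have h2 := (mul_lt_mul_iff_left₀ hm0).mp h
    have h3 : ((l + aN : ℕ):ℝ) < ((k : ℕ):ℝ) := by push_cast; linarith
    have h4 : l + aN < k := by exact_mod_cast h3
    omega
  by_contra hcon
  rw [Set.not_disjoint_iff] at hcon
  obtain ⟨q, hqA, hqB⟩ := hcon
  obtain ⟨ε₁, hε₁, hball₁⟩ := Metric.mem_nhds_iff.mp (mem_interior_iff_mem_nhds.mp hqA)
  obtain ⟨ε₂, hε₂, hball₂⟩ := Metric.mem_nhds_iff.mp (mem_interior_iff_mem_nhds.mp hqB)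
  set ε : ℝ := min ε₁ ε₂ with hεdef
  have hε : 0 < ε := lt_min hε₁ hε₂
  -- bad coordinate sets
  set BadX : Set ℝ := ⋃ t ∈ Finset.Icc (0:ℕ) (2^n),
    ({(t:ℝ)*m + (w i).1, (t:ℝ)*m - 1 + (w i).1,
      (t:ℝ)*m + v.1 + (w i).1, (t:ℝ)*m - 1 + v.1 + (w i).1} : Set ℝ) with hBadX
  set BadY : Set ℝ := ⋃ t ∈ Finset.Icc (0:ℕ) (2^n),
    ({(yCoord t:ℝ) + (w i).2, (yCoord t:ℝ) + 1 + (w i).2,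
      (yCoord t:ℝ) + v.2 + (w i).2, (yCoord t:ℝ) + 1 + v.2 + (w i).2} : Set ℝ) with hBadY
  have hfinX : BadX.Finite :=
    Set.Finite.biUnion (Finset.Icc 0 (2^n)).finite_toSet (fun t _ => Set.toFinite _)
  have hfinY : BadY.Finite :=
    Set.Finite.biUnion (Finset.Icc 0 (2^n)).finite_toSet (fun t _ => Set.toFinite _)
  obtain ⟨x', hx'1, hx'2, hx'S⟩ := exists_avoid' q.1 ε hε BadX hfinX
  obtain ⟨y', hy'1, hy'2, hy'S⟩ := exists_avoid' q.2 ε hε BadY hfinY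
  set q' : ℝ × ℝ := (x', y') with hq'
  have hdist : dist q' q < ε := by
    rw [Prod.dist_eq]
    apply max_lt
    · rw [Real.dist_eq, abs_lt]; constructor <;> simp only [hq'] <;> linarith
    · rw [Real.dist_eq, abs_lt]; constructor <;> simp only [hq'] <;> linarith
  have hq'A : q' ∈ (· + w i) '' Dregion n m :=
    hball₁ (Metric.mem_ball.mpr (lt_of_lt_of_le hdist (min_le_left _ _)))
  have hq'B : q' ∈ (· + w j) '' Dregion n m :=
    hball₂ (Metric.mem_ball.mpr (lt_of_lt_of_le hdist (min_le_right _ _)))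
  obtain ⟨z, hzD, hz⟩ := hq'A
  obtain ⟨z2, hz2D, hz2⟩ := hq'B
  have hzq : z = q' - w i := by rw [← hz]; exact (add_sub_cancel_right z (w i)).symm
  have hz2q : z2 = (q' - w i) - v := by
    have h1 : z2 + (w i + v) = q' := by rw [← hwj]; exact hz2
    have h2 : q' - w i - v = z2 := by rw [← h1]; abel
    exact h2.symm
  rw [hzq] at hzD
  rw [hz2q] at hz2D
  -- unpack avoidance
  have hxS : ∀ t : ℕ, t ≤ 2^n →
      x' ≠ (t:ℝ)*m + (w i).1 ∧ x' ≠ (t:ℝ)*m - 1 + (w i).1 ∧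
      x' ≠ (t:ℝ)*m + v.1 + (w i).1 ∧ x' ≠ (t:ℝ)*m - 1 + v.1 + (w i).1 := by
    intro t ht
    have : x' ∉ ({(t:ℝ)*m + (w i).1, (t:ℝ)*m - 1 + (w i).1,
      (t:ℝ)*m + v.1 + (w i).1, (t:ℝ)*m - 1 + v.1 + (w i).1} : Set ℝ) := by
      intro hmem
      exact hx'S (Set.mem_iUnion₂.mpr ⟨t, by simpa using ht, hmem⟩)
    simp only [Set.mem_insert_iff, Set.mem_singleton_iff, not_or] at this
    exact this
  have hyS : ∀ t : ℕ, t ≤ 2^n →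
      y' ≠ (yCoord t:ℝ) + (w i).2 ∧ y' ≠ (yCoord t:ℝ) + 1 + (w i).2 ∧
      y' ≠ (yCoord t:ℝ) + v.2 + (w i).2 ∧ y' ≠ (yCoord t:ℝ) + 1 + v.2 + (w i).2 := by
    intro t ht
    have : y' ∉ ({(yCoord t:ℝ) + (w i).2, (yCoord t:ℝ) + 1 + (w i).2,
      (yCoord t:ℝ) + v.2 + (w i).2, (yCoord t:ℝ) + 1 + v.2 + (w i).2} : Set ℝ) := by
      intro hmem
      exact hy'S (Set.mem_iUnion₂.mpr ⟨t, by simpa using ht, hmem⟩)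
    simp only [Set.mem_insert_iff, Set.mem_singleton_iff, not_or] at this
    exact this
  -- coordinates of the two points
  have hc1 : (q' - w i).1 = x' - (w i).1 := rfl
  have hc2 : (q' - w i).2 = y' - (w i).2 := rfl
  have hc3 : ((q' - w i) - v).1 = x' - (w i).1 - v.1 := rfl
  have hc4 : ((q' - w i) - v).2 = y' - (w i).2 - v.2 := rfl
  -- strict memberships
  have hP := mem_Dregion_strict' hzD
    (fun t ht => by
      rw [hc1]
      obtain ⟨h1, h2, h3, h4⟩ := hxS t ht
      constructor <;> intro e <;> [exact h1 (by linarith); exact h2 (by linarith)])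
    (fun t ht => by
      rw [hc2]
      obtain ⟨h1, h2, h3, h4⟩ := hyS t ht
      constructor <;> intro e <;> [exact h1 (by linarith); exact h2 (by linarith)])
  have hQ := mem_Dregion_strict' hz2D
    (fun t ht => by
      rw [hc3]
      obtain ⟨h1, h2, h3, h4⟩ := hxS t ht
      constructor <;> intro e <;> [exact h3 (by linarith); exact h4 (by linarith)])
    (fun t ht => by
      rw [hc4]
      obtain ⟨h1, h2, h3, h4⟩ := hyS t ht
      constructor <;> intro e <;> [exact h3 (by linarith); exact h4 (by linarith)])
  rw [hc1, hc2] at hP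
  rw [hc3, hc4] at hQ
  set X : ℝ := x' - (w i).1 with hX
  set Y : ℝ := y' - (w i).2 with hY
  have hv1 : v.1 = (aN:ℝ) * m + b := rfl
  have hv2 : v.2 = 2*(aN:ℝ) - 2*b := rfl
  rw [hv1, hv2] at hQ
  rcases hP with ⟨k, hk1, hk2, hPx1, hPx2, hPy1, hPy2⟩ | ⟨k, hk1, hk2, hPx1, hPx2, hPy1, hPy2⟩ <;>
    rcases hQ with ⟨l, hl1, hl2, hQx1, hQx2, hQy1, hQy2⟩ | ⟨l, hl1, hl2, hQx1, hQx2, hQy1, hQy2⟩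
  · -- bar k, bar l
    have hlk : l + aN ≤ k := step1 l k (by linarith)
    have := keyR l k hl1 hlk
    linarith
  · -- bar k, conn l
    have hlk : l + 1 + aN ≤ k := step2 l k (by linarith)
    have := keyR (l+1) k (by omega) (by omega)
    push_cast at this
    linarith
  · -- conn k, bar l
    have hlk : l + aN ≤ k := step1 l k (by linarith)
    have := keyR l k hl1 hlk
    linarith
  · -- conn k, conn l
    rcases le_or_gt k (l + aN) with hle | hlt
    · have h5 : (k:ℝ)*m ≤ ((l + aN : ℕ):ℝ)*m :=
        mul_le_mul_of_nonneg_right (Nat.cast_le.mpr hle) hm0.le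
      push_cast at h5
      linarith
    · have h5 : ((l + aN + 1 : ℕ):ℝ)*m ≤ (k:ℝ)*m :=
        mul_le_mul_of_nonneg_right (Nat.cast_le.mpr hlt) hm0.le
      push_cast at h5
      linarith
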